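/- Let a, b, c be integers with a ≠ 0, let q(x) = a·x² + b·x + c and d = b² − 4·a·c, and let u, v be positive integers with gcd(2·a, u·v) = 1. Put Q₀ = {x ∈ ℤ : q(x) ≡ 0 (mod u·v)}, Q₁ = {x ∈ ℤ : q(x) ≡ 0 (mod v)}, Σ₀′ = {σ ∈ ℤ : 0 ≤ σ < u·v and σ² ≡ d (mod u·v)}, and Σ₁′ = {σ ∈ ℤ : 0 ≤ σ < v and σ² ≡ d (mod v)}. Then Q₁ is nonempty and Q₁ = Q₀ if and only if Σ₁′ is nonempty and Σ₀′ = {σ + j·v : σ ∈ Σ₁′, j ∈ {0, 1, …, u − 1}}. -/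
import Mathlib

private lemma transfer {m x y D : ℤ} (h : x ≡ y [ZMOD m]) :
    m ∣ x ^ 2 - D ↔ m ∣ y ^ 2 - D := by
  rw [← Int.modEq_iff_dvd, ← Int.modEq_iff_dvd]
  have h2 : x ^ 2 ≡ y ^ 2 [ZMOD m] := h.pow 2
  exact ⟨fun h' => h'.trans h2, fun h' => h'.trans h2.symm⟩

/-- Equivalence (a) ⟺ (d) of the paper's Lemma 3.2. -/
theorem lemma_3_2_a_iff_d (a b c u v : ℤ) (ha : a ≠ 0) (hu : 0 < u) (hv : 0 < v)
    (hcop : Int.gcd (2 * a) (u * v) = 1) :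
    (({x : ℤ | v ∣ a * x ^ 2 + b * x + c}).Nonempty ∧
      {x : ℤ | v ∣ a * x ^ 2 + b * x + c} = {x : ℤ | u * v ∣ a * x ^ 2 + b * x + c}) ↔
    (({σ : ℤ | 0 ≤ σ ∧ σ < v ∧ v ∣ σ ^ 2 - (b ^ 2 - 4 * a * c)}).Nonempty ∧
      {σ : ℤ | 0 ≤ σ ∧ σ < u * v ∧ u * v ∣ σ ^ 2 - (b ^ 2 - 4 * a * c)} =
        {y : ℤ | ∃ σ : ℤ, (0 ≤ σ ∧ σ < v ∧ v ∣ σ ^ 2 - (b ^ 2 - 4 * a * c)) ∧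
          ∃ j : ℤ, 0 ≤ j ∧ j < u ∧ y = σ + j * v}) := by
  have huv : 0 < u * v := mul_pos hu hv
  have hco : IsCoprime (2 * a) (u * v) := Int.isCoprime_iff_gcd_eq_one.mpr hcop
  have h2 : IsCoprime 2 (u * v) := hco.of_mul_left_left
  have h4 : IsCoprime (u * v) (4 * a) := by
    have h' : IsCoprime (2 * (2 * a)) (u * v) := h2.mul_left hco
    have : IsCoprime (4 * a) (u * v) := by
      have e : (4 : ℤ) * a = 2 * (2 * a) := by ring
      rw [e]; exact h'
    exact this.symm
  have h4v : IsCoprime v (4 * a) := h4.of_mul_left_right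
  -- key identity
  have key : ∀ x : ℤ, (2 * a * x + b) ^ 2 - (b ^ 2 - 4 * a * c) =
      4 * a * (a * x ^ 2 + b * x + c) := fun x => by ring
  -- inverse of 2a mod u*v
  obtain ⟨s, t, hst⟩ := hco
  have inv : ∀ r : ℤ, (2 * a * (s * (r - b)) + b) ≡ r [ZMOD u * v] := by
    intro r
    have hdvd : (u * v) ∣ r - (2 * a * (s * (r - b)) + b) :=
      ⟨t * (r - b), by linear_combination (b - r) * hst⟩
    exact (Int.modEq_iff_dvd.mpr hdvd)
  have P1 : ({x : ℤ | v ∣ a * x ^ 2 + b * x + c}).Nonempty ↔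
      ∃ σ : ℤ, v ∣ σ ^ 2 - (b ^ 2 - 4 * a * c) := by
    constructor
    · rintro ⟨x, hx⟩
      exact ⟨2 * a * x + b, by rw [key]; exact hx.mul_left (4 * a)⟩
    · rintro ⟨σ, hσ⟩
      refine ⟨s * (σ - b), ?_⟩
      have hc : (2 * a * (s * (σ - b)) + b) ≡ σ [ZMOD v] :=
        (inv σ).of_dvd (dvd_mul_left v u)
      have h1 : v ∣ (2 * a * (s * (σ - b)) + b) ^ 2 - (b ^ 2 - 4 * a * c) :=
        (transfer hc).mpr hσ
      rw [key] at h1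
      exact h4v.dvd_of_dvd_mul_left h1
  have P2 : ({x : ℤ | v ∣ a * x ^ 2 + b * x + c} =
        {x : ℤ | u * v ∣ a * x ^ 2 + b * x + c}) ↔
      ∀ s' : ℤ, v ∣ s' ^ 2 - (b ^ 2 - 4 * a * c) →
        u * v ∣ s' ^ 2 - (b ^ 2 - 4 * a * c) := by
    rw [Set.ext_iff]
    simp only [Set.mem_setOf_eq]
    constructor
    · intro h r hr
      set x := s * (r - b) with hx
      have hc : (2 * a * x + b) ≡ r [ZMOD u * v] := inv r
      have hcv : (2 * a * x + b) ≡ r [ZMOD v] := hc.of_dvd (dvd_mul_left v u)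
      have h1 : v ∣ (2 * a * x + b) ^ 2 - (b ^ 2 - 4 * a * c) := (transfer hcv).mpr hr
      rw [key] at h1
      have h2' : v ∣ a * x ^ 2 + b * x + c := h4v.dvd_of_dvd_mul_left h1
      have h3 : u * v ∣ a * x ^ 2 + b * x + c := (h x).mp h2'
      have h4' : u * v ∣ (2 * a * x + b) ^ 2 - (b ^ 2 - 4 * a * c) := by
        rw [key]; exact h3.mul_left (4 * a)
      exact (transfer hc).mp h4'
    · intro h x
      constructor
      · intro hx
        have h1 : v ∣ (2 * a * x + b) ^ 2 - (b ^ 2 - 4 * a * c) := by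
          rw [key]; exact hx.mul_left (4 * a)
        have h2' := h _ h1
        rw [key] at h2'
        exact h4.dvd_of_dvd_mul_left h2'
      · intro hx
        exact (dvd_mul_left v u).trans hx
  have R1 : ({σ : ℤ | 0 ≤ σ ∧ σ < v ∧ v ∣ σ ^ 2 - (b ^ 2 - 4 * a * c)}).Nonempty ↔
      ∃ σ : ℤ, v ∣ σ ^ 2 - (b ^ 2 - 4 * a * c) := by
    constructor
    · rintro ⟨σ, _, _, h⟩; exact ⟨σ, h⟩
    · rintro ⟨σ, hσ⟩
      refine ⟨σ % v, Int.emod_nonneg σ hv.ne', Int.emod_lt_of_pos σ hv, ?_⟩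
      have hc : σ % v ≡ σ [ZMOD v] := Int.emod_emod_of_dvd σ dvd_rfl
      exact (transfer hc).mpr hσ
  have R2 : ({σ : ℤ | 0 ≤ σ ∧ σ < u * v ∧ u * v ∣ σ ^ 2 - (b ^ 2 - 4 * a * c)} =
        {y : ℤ | ∃ σ : ℤ, (0 ≤ σ ∧ σ < v ∧ v ∣ σ ^ 2 - (b ^ 2 - 4 * a * c)) ∧
          ∃ j : ℤ, 0 ≤ j ∧ j < u ∧ y = σ + j * v}) ↔
      ∀ s' : ℤ, v ∣ s' ^ 2 - (b ^ 2 - 4 * a * c) →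
        u * v ∣ s' ^ 2 - (b ^ 2 - 4 * a * c) := by
    have hA : ∀ y : ℤ, (∃ σ : ℤ, (0 ≤ σ ∧ σ < v ∧ v ∣ σ ^ 2 - (b ^ 2 - 4 * a * c)) ∧
          ∃ j : ℤ, 0 ≤ j ∧ j < u ∧ y = σ + j * v) ↔
        (0 ≤ y ∧ y < u * v ∧ v ∣ y ^ 2 - (b ^ 2 - 4 * a * c)) := by
      intro y
      constructor
      · rintro ⟨σ, ⟨hσ0, hσv, hσd⟩, j, hj0, hju, rfl⟩
        refine ⟨by positivity, ?_, ?_⟩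
        · nlinarith [mul_le_mul_of_nonneg_right (by linarith : j ≤ u - 1) hv.le]
        · have hc : σ + j * v ≡ σ [ZMOD v] :=
            (Int.modEq_iff_dvd.mpr ⟨-j, by ring⟩)
          exact (transfer hc).mpr hσd
      · rintro ⟨hy0, hyuv, hyd⟩
        refine ⟨y % v, ⟨Int.emod_nonneg y hv.ne', Int.emod_lt_of_pos y hv, ?_⟩,
          y / v, Int.ediv_nonneg hy0 hv.le, ?_, ?_⟩
        · exact (transfer (Int.emod_emod_of_dvd y dvd_rfl)).mpr hyd
        · exact (Int.ediv_lt_iff_lt_mul hv).mpr (by linarith [mul_comm u v])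
        · have := Int.emod_add_mul_ediv y v
          linarith [this]
    rw [Set.ext_iff]
    simp only [Set.mem_setOf_eq]
    constructor
    · intro h r hr
      set y := r % (u * v) with hy
      have hc : y ≡ r [ZMOD u * v] := Int.emod_emod_of_dvd r dvd_rfl
      have hcv : y ≡ r [ZMOD v] := hc.of_dvd (dvd_mul_left v u)
      have hmem : ∃ σ : ℤ, (0 ≤ σ ∧ σ < v ∧ v ∣ σ ^ 2 - (b ^ 2 - 4 * a * c)) ∧
          ∃ j : ℤ, 0 ≤ j ∧ j < u ∧ y = σ + j * v := by
        rw [hA]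
        exact ⟨Int.emod_nonneg r huv.ne', Int.emod_lt_of_pos r huv,
          (transfer hcv).mpr hr⟩
      have h2' := (h y).mpr hmem
      exact (transfer hc).mp h2'.2.2
    · intro h y
      rw [hA]
      constructor
      · rintro ⟨h0, h1, h2'⟩
        exact ⟨h0, h1, (dvd_mul_left v u).trans h2'⟩
      · rintro ⟨h0, h1, h2'⟩
        exact ⟨h0, h1, h _ h2'⟩
  rw [P1, P2, R1, R2]
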